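/- Let D_1,…,D_k be an (n,k,c,λ)-EDF in an abelian group G of order n. For the authentication code with keyspace G and encoding rule e_g(i) = D_i + g (for key g ∈ G and source i ∈ {1,…,k}), and for any two distinct messages m, m' ∈ G, the number of keys g such that m ∈ D_i + g and m' ∈ D_j + g for some i ≠ j is exactly λ. -/
import Mathlib


open Finset

/-- The number of ways a group element `g` is realized as an "external difference"
`x - y` with `x ∈ D i`, `y ∈ D j` and `i ≠ j`. -/
def extDiffCount {G : Type*} [AddCommGroup G] [Fintype G] [DecidableEq G] {k : ℕ}
    (D : Fin k → Finset G) (g : G) : ℕ :=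
  (univ.filter fun q : (Fin k × Fin k) × G × G =>
    q.1.1 ≠ q.1.2 ∧ q.2.1 ∈ D q.1.1 ∧ q.2.2 ∈ D q.1.2 ∧ q.2.1 - q.2.2 = g).card

theorem stmt_5 {G : Type*} [AddCommGroup G] [Fintype G] [DecidableEq G]
    (n k c lam : ℕ) (hn : Fintype.card G = n)
    (D : Fin k → Finset G) (hc : ∀ i, (D i).card = c)
    (hdisj : ∀ i j : Fin k, i ≠ j → Disjoint (D i) (D j))
    (hEDF : ∀ g : G, g ≠ 0 → extDiffCount D g = lam)
    (m m' : G) (hmm : m ≠ m') :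
    (univ.filter fun g : G =>
      ∃ i j : Fin k, i ≠ j ∧ m - g ∈ D i ∧ m' - g ∈ D j).card = lam := by
  have huniq : ∀ (i i' : Fin k) (x : G), x ∈ D i → x ∈ D i' → i = i' := by
    intro i i' x hx hx'
    by_contra h
    exact (Finset.disjoint_left.mp (hdisj i i' h) hx) hx'
  rw [← hEDF (m - m') (sub_ne_zero.mpr hmm)]
  unfold extDiffCount
  refine (Finset.card_bij (fun q _ => m - q.2.1) ?_ ?_ ?_).symm
  · intro q hq
    simp only [mem_filter, mem_univ, true_and] at hq ⊢
    obtain ⟨hij, hx, hy, hd⟩ := hq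
    refine ⟨q.1.1, q.1.2, hij, by simpa using hx, ?_⟩
    have h2 : q.2.2 = q.2.1 - (m - m') := by rw [← hd]; abel
    have : m' - (m - q.2.1) = q.2.2 := by rw [h2]; abel
    rw [this]; exact hy
  · intro q hq q' hq' h
    simp only [mem_filter, mem_univ, true_and] at hq hq'
    obtain ⟨hij, hx, hy, hd⟩ := hq
    obtain ⟨hij', hx', hy', hd'⟩ := hq'
    have hx1 : q.2.1 = q'.2.1 := by
      have := sub_right_injective (G := G) (b := m) h
      simpa using this
    have hy1 : q.2.2 = q'.2.2 := by
      have e1 : q.2.2 = q.2.1 - (m - m') := by rw [← hd]; abel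
      have e2 : q'.2.2 = q'.2.1 - (m - m') := by rw [← hd']; abel
      rw [e1, e2, hx1]
    have hi : q.1.1 = q'.1.1 := huniq _ _ _ hx (hx1 ▸ hx')
    have hj : q.1.2 = q'.1.2 := huniq _ _ _ hy (hy1 ▸ hy')
    exact Prod.ext (Prod.ext hi hj) (Prod.ext hx1 hy1)
  · intro g hg
    simp only [mem_filter, mem_univ, true_and] at hg
    obtain ⟨i, j, hij, hx, hy⟩ := hg
    refine ⟨((i, j), (m - g, m' - g)), ?_, by simp⟩
    simp only [mem_filter, mem_univ, true_and]
    exact ⟨hij, hx, hy, by abel⟩
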